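/- Let d = gcd(a,b) > 1 and n = pd + q with 0 ≤ q < d. If a firing sequence in the (a/d)-(b/d) game starting with p chips at the origin leads to state σ = (s_m), then the same sequence of vertex firings is legal in the a-b game starting with n chips and leads to the state σ' with s'_0 = d·s_0 + q and s'_m = d·s_m for m ≠ 0. -/

import Mathlib

/-- Firing at vertex `i` in the `a`-`b` chip-firing game on `ℤ`:
requires at least `a+b` chips at `i`, sends `a` chips to `i-1` and `b` chips to `i+1`. -/
def fireAt (a b : ℕ) (i : ℤ) (σ σ' : ℤ →₀ ℕ) : Prop :=
  a + b ≤ σ i ∧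
  σ' (i - 1) = σ (i - 1) + a ∧
  σ' i = σ i - (a + b) ∧
  σ' (i + 1) = σ (i + 1) + b ∧
  ∀ m : ℤ, m ≠ i - 1 → m ≠ i → m ≠ i + 1 → σ' m = σ m

/-- Reachability by a finite sequence of firings. -/
def Reaches (a b : ℕ) : (ℤ →₀ ℕ) → (ℤ →₀ ℕ) → Prop :=
  Relation.ReflTransGen (fun σ σ' => ∃ i, fireAt a b i σ σ')

/-- Initial state: `n` chips at the origin. -/
noncomputable def initState (n : ℕ) : ℤ →₀ ℕ := Finsupp.single 0 n

/-- `Leads a b σ L σ'`: the list `L` of vertices, fired in order (each legal),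
leads from state `σ` to state `σ'`. -/
inductive Leads (a b : ℕ) : (ℤ →₀ ℕ) → List ℤ → (ℤ →₀ ℕ) → Prop
  | nil (σ : ℤ →₀ ℕ) : Leads a b σ [] σ
  | cons {σ τ σ' : ℤ →₀ ℕ} {i : ℤ} {L : List ℤ} :
      fireAt a b i σ τ → Leads a b τ L σ' → Leads a b σ (i :: L) σ'

/-- The state polynomial `S_σ(t) = Σ_m s_m t^{-m}` evaluated at `t`. -/
noncomputable def statePoly (σ : ℤ →₀ ℕ) (t : ℚ) : ℚ :=
  ∑ m ∈ σ.support, (σ m : ℚ) * t ^ (-m)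

/-- The left part `S_{σ^L}(t) = Σ_{m ≤ 0} s_m t^{-m}`. -/
noncomputable def statePolyL (σ : ℤ →₀ ℕ) (t : ℚ) : ℚ :=
  ∑ m ∈ σ.support.filter (fun m => m ≤ 0), (σ m : ℚ) * t ^ (-m)

/-- The right part `S_{σ^R}(t) = Σ_{m ≥ 1} s_m t^{-m}`. -/
noncomputable def statePolyR (σ : ℤ →₀ ℕ) (t : ℚ) : ℚ :=
  ∑ m ∈ σ.support.filter (fun m => 1 ≤ m), (σ m : ℚ) * t ^ (-m)

/-- `M_σ = Σ_m m·s_m`. -/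
def Mval (σ : ℤ →₀ ℕ) : ℤ := ∑ m ∈ σ.support, m * (σ m : ℤ)

/-- A final (stable) state of the game started with `n` chips at the origin. -/
def IsFinalState (a b n : ℕ) (σ : ℤ →₀ ℕ) : Prop :=
  Reaches a b (initState n) σ ∧ ∀ i : ℤ, σ i < a + b

/-- Firing at vertex `i ≥ 1` on the right part: chips sent to vertex `0` are discarded. -/
def rfireAt (a b : ℕ) (i : ℤ) (σ σ' : ℤ →₀ ℕ) : Prop :=
  1 ≤ i ∧ a + b ≤ σ i ∧
  (∀ m : ℤ, m ≤ 0 → σ' m = 0) ∧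
  σ' i = σ i - (a + b) ∧
  σ' (i + 1) = σ (i + 1) + b ∧
  (1 ≤ i - 1 → σ' (i - 1) = σ (i - 1) + a) ∧
  ∀ m : ℤ, 1 ≤ m → m ≠ i - 1 → m ≠ i → m ≠ i + 1 → σ' m = σ m

/-- `Settles a b σ τ`: `τ` is a stable configuration obtained from `σ`
by firings among the vertices `≥ 1`. -/
def Settles (a b : ℕ) (σ τ : ℤ →₀ ℕ) : Prop :=
  Relation.ReflTransGen (fun x y => ∃ i, rfireAt a b i x y) σ τ ∧ ∀ i : ℤ, τ i < a + b

/-- The settlement sequence: `ξ 0` is empty and `ξ (k+1)` is obtained from `ξ k`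
by adding `b` chips at vertex `1` and stabilizing within the vertices `≥ 1`. -/
def SettlementSeq (a b : ℕ) (ξ : ℕ → ℤ →₀ ℕ) : Prop :=
  ξ 0 = 0 ∧ ∀ k : ℕ, Settles a b (ξ k + Finsupp.single 1 b) (ξ (k + 1))

/-- `RLeads a b σ L σ'`: the list `L` of vertices fired in order (right-part firings)
leads from `σ` to `σ'`. -/
inductive RLeads (a b : ℕ) : (ℤ →₀ ℕ) → List ℤ → (ℤ →₀ ℕ) → Prop
  | nil (σ : ℤ →₀ ℕ) : RLeads a b σ [] σ
  | cons {σ τ σ' : ℤ →₀ ℕ} {i : ℤ} {L : List ℤ} :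
      rfireAt a b i σ τ → RLeads a b τ L σ' → RLeads a b σ (i :: L) σ'

/-- The `m`-th tetrahedral number. -/
def Te (m : ℕ) : ℕ := m * (m + 1) * (m + 2) / 6


lemma fire_scale (a' b' d q : ℕ) (i : ℤ) (σ τ : ℤ →₀ ℕ)
    (h : fireAt a' b' i σ τ) :
    fireAt (d * a') (d * b') i (d • σ + Finsupp.single 0 q) (d • τ + Finsupp.single 0 q) := by
  obtain ⟨h1, h2, h3, h4, h5⟩ := h
  have hmul : d * (a' + b') ≤ d * σ i := Nat.mul_le_mul_left d h1
  rw [Nat.mul_add] at hmul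
  refine ⟨?_, ?_, ?_, ?_, ?_⟩
  · simp only [Finsupp.add_apply, Finsupp.smul_apply, smul_eq_mul]
    exact hmul.trans (Nat.le_add_right _ _)
  · simp only [Finsupp.add_apply, Finsupp.smul_apply, smul_eq_mul, h2]
    ring
  · simp only [Finsupp.add_apply, Finsupp.smul_apply, smul_eq_mul, h3]
    have e : σ i = (σ i - (a' + b')) + (a' + b') := (Nat.sub_add_cancel h1).symm
    have e2 : d * σ i = d * (σ i - (a' + b')) + (d * a' + d * b') := by
      conv_lhs => rw [e]
      rw [Nat.mul_add, Nat.mul_add]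
    omega
  · simp only [Finsupp.add_apply, Finsupp.smul_apply, smul_eq_mul, h4]
    ring
  · intro m hm1 hm2 hm3
    simp only [Finsupp.add_apply, Finsupp.smul_apply, smul_eq_mul, h5 m hm1 hm2 hm3]

lemma leads_scale (a' b' d q : ℕ) {σ τ : ℤ →₀ ℕ} {L : List ℤ}
    (h : Leads a' b' σ L τ) :
    Leads (d * a') (d * b') (d • σ + Finsupp.single 0 q) L (d • τ + Finsupp.single 0 q) := by
  induction h with
  | nil σ => exact Leads.nil _
  | cons hf _ ih => exact Leads.cons (fire_scale _ _ _ _ _ _ _ hf) ih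

/-- With `d = gcd(a,b) > 1` and `n = p·d + q`, `0 ≤ q < d`, any firing
sequence legal in the `(a/d)-(b/d)` game from `p` chips, reaching `σ`, is legal in
the `a-b` game from `n` chips and reaches the state with `d·s₀ + q` chips at the
origin and `d·s_m` chips at each other vertex `m`. -/
theorem stmt7 (a b : ℕ) (ha : 0 < a) (hb : 0 < b) (hd : 1 < Nat.gcd a b)
    (n p q : ℕ) (hn : n = p * Nat.gcd a b + q) (hq : q < Nat.gcd a b)
    (σ : ℤ →₀ ℕ) (L : List ℤ)
    (h : Leads (a / Nat.gcd a b) (b / Nat.gcd a b) (initState p) L σ) :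
    ∃ σ' : ℤ →₀ ℕ, Leads a b (initState n) L σ' ∧
      σ' 0 = Nat.gcd a b * σ 0 + q ∧
      ∀ m : ℤ, m ≠ 0 → σ' m = Nat.gcd a b * σ m := by
  set d := Nat.gcd a b with hdd
  have haa : d * (a / d) = a := Nat.mul_div_cancel' (Nat.gcd_dvd_left a b)
  have hbb : d * (b / d) = b := Nat.mul_div_cancel' (Nat.gcd_dvd_right a b)
  have hinit : initState n = d • initState p + Finsupp.single 0 q := by
    rw [initState, initState, Finsupp.smul_single, ← Finsupp.single_add, smul_eq_mul, hn,
      Nat.mul_comm]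
  refine ⟨d • σ + Finsupp.single 0 q, ?_, ?_, ?_⟩
  · rw [hinit, ← haa, ← hbb]
    exact leads_scale _ _ _ _ h
  · simp only [Finsupp.add_apply, Finsupp.smul_apply, smul_eq_mul, Finsupp.single_eq_same]
  · intro m hm
    simp only [Finsupp.add_apply, Finsupp.smul_apply, smul_eq_mul,
      Finsupp.single_eq_of_ne' (Ne.symm hm), Nat.add_zero]
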